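/- (Implicit Inversion Theorem, existence) Let F be a field, let S, P, Q be pairwise disjoint finite sets, and let V_SP ⊆ F_{S∪P} and V_SQ ⊆ F_{S∪Q} be subspaces. There exists a subspace V_PQ ⊆ F_{P∪Q} with V_SP ↔ V_PQ = V_SQ if and only if V_SP∘S ⊇ V_SQ∘S and V_SP×S ⊆ V_SQ×S. Moreover, when these two conditions hold, the subspace V_SP ↔ V_SQ is such a solution, i.e. V_SP ↔ (V_SP ↔ V_SQ) = V_SQ. -/

import Mathlib

noncomputable section

open scoped BigOperators

/-- Matched composition over the shared (middle) index set. -/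
def matchedComp {A C B : Type*} (K₁ : Set (A × C)) (K₂ : Set (C × B)) : Set (A × B) :=
  {x | ∃ c, (x.1, c) ∈ K₁ ∧ (c, x.2) ∈ K₂}

/-- Auxiliary submodule: the matched composition `V_SP ↔ V_SQ` over `S`. -/
def auxPQ (F S P Q : Type*) [Field F]
    (VSP : Submodule F ((S → F) × (P → F))) (VSQ : Submodule F ((S → F) × (Q → F))) :
    Submodule F ((P → F) × (Q → F)) where
  carrier := {y : (P → F) × (Q → F) | ∃ f : S → F, (f, y.1) ∈ VSP ∧ (f, y.2) ∈ VSQ}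
  zero_mem' := ⟨0, by exact VSP.zero_mem, by exact VSQ.zero_mem⟩
  add_mem' := by
    rintro a b ⟨fa, ha1, ha2⟩ ⟨fb, hb1, hb2⟩
    exact ⟨fa + fb, VSP.add_mem ha1 hb1, VSQ.add_mem ha2 hb2⟩
  smul_mem' := by
    rintro c a ⟨fa, ha1, ha2⟩
    exact ⟨c • fa, VSP.smul_mem c ha1, VSQ.smul_mem c ha2⟩

/-- Implicit Inversion Theorem (existence): `V_SP ↔ V_PQ = V_SQ` has a subspace
solution `V_PQ` iff `V_SP∘S ⊇ V_SQ∘S` and `V_SP×S ⊆ V_SQ×S`; moreover, under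
those conditions `V_SP ↔ V_SQ` is a solution. -/
theorem stmt3 (F S P Q : Type*) [Field F] [Fintype S] [Fintype P] [Fintype Q]
    (VSP : Submodule F ((S → F) × (P → F))) (VSQ : Submodule F ((S → F) × (Q → F))) :
    ((∃ VPQ : Submodule F ((P → F) × (Q → F)),
        matchedComp (VSP : Set ((S → F) × (P → F))) (VPQ : Set ((P → F) × (Q → F)))
          = (VSQ : Set ((S → F) × (Q → F)))) ↔
      (Prod.fst '' (VSQ : Set ((S → F) × (Q → F)))
          ⊆ Prod.fst '' (VSP : Set ((S → F) × (P → F)))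
        ∧ {f : S → F | (f, (0 : P → F)) ∈ VSP} ⊆ {f : S → F | (f, (0 : Q → F)) ∈ VSQ}))
    ∧ ((Prod.fst '' (VSQ : Set ((S → F) × (Q → F)))
          ⊆ Prod.fst '' (VSP : Set ((S → F) × (P → F)))
        ∧ {f : S → F | (f, (0 : P → F)) ∈ VSP} ⊆ {f : S → F | (f, (0 : Q → F)) ∈ VSQ}) →
      matchedComp (VSP : Set ((S → F) × (P → F)))
          {y : (P → F) × (Q → F) | ∃ f : S → F, (f, y.1) ∈ VSP ∧ (f, y.2) ∈ VSQ}
        = (VSQ : Set ((S → F) × (Q → F)))) := by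
  have key : (Prod.fst '' (VSQ : Set ((S → F) × (Q → F)))
          ⊆ Prod.fst '' (VSP : Set ((S → F) × (P → F)))
        ∧ {f : S → F | (f, (0 : P → F)) ∈ VSP} ⊆ {f : S → F | (f, (0 : Q → F)) ∈ VSQ}) →
      matchedComp (VSP : Set ((S → F) × (P → F)))
          {y : (P → F) × (Q → F) | ∃ f : S → F, (f, y.1) ∈ VSP ∧ (f, y.2) ∈ VSQ}
        = (VSQ : Set ((S → F) × (Q → F))) := by
    rintro ⟨h1, h2⟩
    ext ⟨f, h⟩
    constructor
    · rintro ⟨g, hfg, ⟨f', hf'g, hf'h⟩⟩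
      have hd : ((f - f', (0 : P → F)) : (S → F) × (P → F)) ∈ VSP := by
        have := VSP.sub_mem hfg hf'g
        simpa using this
      have hd' : ((f - f', (0 : Q → F)) : (S → F) × (Q → F)) ∈ VSQ := h2 hd
      have := VSQ.add_mem hd' hf'h
      simpa using this
    · intro hfh
      obtain ⟨x, hx, hxf⟩ := h1 ⟨(f, h), hfh, rfl⟩
      have hfx : ((f, x.2) : (S → F) × (P → F)) ∈ VSP := by
        have hxf' : x.1 = f := hxf
        rw [← hxf']; simpa using hx
      exact ⟨x.2, hfx, ⟨f, hfx, hfh⟩⟩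
  refine ⟨⟨?_, ?_⟩, key⟩
  · rintro ⟨VPQ, hV⟩
    constructor
    · intro f hf
      obtain ⟨x, hx, hxf⟩ := hf
      rw [← hV] at hx
      obtain ⟨g, hg, _⟩ := hx
      exact ⟨(x.1, g), hg, hxf⟩
    · intro f hf
      have : ((f, (0 : Q → F)) : (S → F) × (Q → F)) ∈
          matchedComp (VSP : Set ((S → F) × (P → F))) (VPQ : Set ((P → F) × (Q → F))) :=
        ⟨0, hf, VPQ.zero_mem⟩
      rw [hV] at this
      exact this
  · rintro ⟨h1, h2⟩
    exact ⟨auxPQ F S P Q VSP VSQ, key ⟨h1, h2⟩⟩
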